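/- One-step Lyapunov contraction for PAGE under the PŁ condition: under the assumptions of the PAGE analysis (each fᵢ L-smooth and τ-weakly convex, f μ-PŁ, stepsize γ ≤ 1/(L(1 + √(4τ/(L+τ))·√((1−p)/p))) with γ < 1/L if τ = 0, a = 1 − γ(L−τ)/2, b = γ(L−τ)/2), the conditional expectation of the Lyapunov function Ψ^{t+1} satisfies E[Ψ^{t+1} | F^t] ≤ ρ Ψ^t, where ρ = max(1 − (1−2b)γμ, 1 − p(1 − 1/(2a))) < 1. -/

import Mathlib

open scoped RealInnerProductSpace
set_option linter.unusedSectionVars false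
set_option linter.unusedVariables false
set_option maxHeartbeats 1000000

section PageAux
variable {X : Type*} [NormedAddCommGroup X] [InnerProductSpace ℝ X] [CompleteSpace X]

lemma page_line_hasDerivAt (c v : X) (t : ℝ) : HasDerivAt (fun s : ℝ => c + s • v) v t := by
  simpa using ((hasDerivAt_id t).smul_const v).const_add c

lemma page_hasDerivAt_comp_line {f : X → ℝ} (hf : Differentiable ℝ f) (c v : X) (t : ℝ) :
    HasDerivAt (fun s : ℝ => f (c + s • v)) ⟪gradient f (c + t • v), v⟫ t := by
  have h1 := (hf (c + t • v)).hasGradientAt.hasFDerivAt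
  have := h1.comp_hasDerivAt t (page_line_hasDerivAt c v t)
  simpa [InnerProductSpace.toDual_apply_apply, Function.comp_def] using this

lemma page_descent_lemma {f : X → ℝ} {M : ℝ} (hM : 0 ≤ M) (hf : Differentiable ℝ f)
    (hlip : ∀ x y, ‖gradient f x - gradient f y‖ ≤ M * ‖x - y‖) (x y : X) :
    f y ≤ f x + ⟪gradient f x, y - x⟫ + M / 2 * ‖y - x‖ ^ 2 := by
  set v := y - x with hv
  set g : ℝ → ℝ := fun t => f (x + t • v) - t * ⟪gradient f x, v⟫ - M * t ^ 2 / 2 * ‖v‖ ^ 2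
    with hg
  have hder : ∀ t : ℝ, HasDerivAt g
      (⟪gradient f (x + t • v), v⟫ - ⟪gradient f x, v⟫ - M * t * ‖v‖ ^ 2) t := by
    intro t
    have h1 := page_hasDerivAt_comp_line hf x v t
    have h2 : HasDerivAt (fun t : ℝ => t * ⟪gradient f x, v⟫) ⟪gradient f x, v⟫ t := by
      simpa using (hasDerivAt_id t).mul_const _
    have h3 : HasDerivAt (fun t : ℝ => M * t ^ 2 / 2 * ‖v‖ ^ 2) (M * t * ‖v‖ ^ 2) t := by
      have : HasDerivAt (fun t : ℝ => t ^ 2) (2 * t) t := by simpa using hasDerivAt_pow 2 t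
      have := ((this.const_mul M).div_const 2).mul_const (‖v‖ ^ 2)
      exact this.congr_deriv (by ring)
    exact (h1.sub h2).sub h3
  have hmono : AntitoneOn g (Set.Icc (0:ℝ) 1) := by
    apply antitoneOn_of_deriv_nonpos (convex_Icc 0 1)
    · exact fun t _ => ((hder t).differentiableAt).continuousAt.continuousWithinAt
    · exact fun t _ => ((hder t).differentiableAt).differentiableWithinAt
    · intro t ht
      rw [interior_Icc] at ht
      rw [(hder t).deriv]
      have hcs : ⟪gradient f (x + t • v) - gradient f x, v⟫ ≤ M * t * ‖v‖ ^ 2 := by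
        calc ⟪gradient f (x + t • v) - gradient f x, v⟫
            ≤ ‖gradient f (x + t • v) - gradient f x‖ * ‖v‖ := real_inner_le_norm _ _
          _ ≤ (M * ‖(x + t • v) - x‖) * ‖v‖ := by
              have := hlip (x + t • v) x
              exact mul_le_mul_of_nonneg_right (by simpa using this) (norm_nonneg v)
          _ = M * t * ‖v‖ ^ 2 := by
              have : ‖(x + t • v) - x‖ = t * ‖v‖ := by
                simp [norm_smul, abs_of_pos ht.1]
              rw [this]; ring
      have := inner_sub_left (𝕜 := ℝ) (gradient f (x + t • v)) (gradient f x) v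
      linarith [hcs, this.symm.le, this.le]
  have h01 := hmono (Set.mem_Icc.mpr ⟨le_refl 0, zero_le_one⟩)
    (Set.mem_Icc.mpr ⟨zero_le_one, le_refl 1⟩) zero_le_one
  have e0 : g 0 = f x := by simp [hg]
  have e1 : g 1 = f y - ⟪gradient f x, v⟫ - M / 2 * ‖v‖ ^ 2 := by
    have h1 : x + (1:ℝ) • v = y := by simp [hv]
    simp only [hg, one_pow, mul_one, one_mul, h1]
  rw [e0, e1] at h01
  linarith

lemma page_convex_tangent {f : X → ℝ} (hf : Differentiable ℝ f)
    (hc : ConvexOn ℝ Set.univ f) (x y : X) :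
    f x + ⟪gradient f x, y - x⟫ ≤ f y := by
  set v := y - x with hv
  have hφc : ConvexOn ℝ Set.univ (fun t : ℝ => f (x + t • v)) := by
    have := hc.comp_affineMap (AffineMap.lineMap x (x + v) : ℝ →ᵃ[ℝ] X)
    have he : (Set.univ : Set ℝ) = (AffineMap.lineMap x (x + v) : ℝ →ᵃ[ℝ] X) ⁻¹' Set.univ := by
      simp
    rw [← he] at this
    refine this.congr (fun t _ => ?_)
    simp [AffineMap.lineMap_apply]
    abel
  have hd := page_hasDerivAt_comp_line hf x v 0
  have := hφc.le_slope_of_hasDerivAt (Set.mem_univ 0) (Set.mem_univ 1) zero_lt_one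
    (by simpa using hd)
  rw [slope_def_field] at this
  simp only [zero_smul, add_zero, one_smul] at this
  have h1 : x + v = y := by rw [hv]; abel
  rw [h1] at this
  have : ⟪gradient f x, v⟫ ≤ f y - f x := by
    simpa [div_one] using this
  linarith

lemma HasGradientAt.add'' {f g : X → ℝ} {f' g' z : X} (hf : HasGradientAt f f' z)
    (hg : HasGradientAt g g' z) : HasGradientAt (fun w => f w + g w) (f' + g') z := by
  rw [hasGradientAt_iff_hasFDerivAt] at *
  rw [map_add]
  exact hf.add hg

lemma page_hasGradientAt_inner_const (c z : X) : HasGradientAt (fun w => ⟪c, w⟫) c z := by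
  rw [hasGradientAt_iff_hasFDerivAt]
  have h := (InnerProductSpace.toDual ℝ X c).hasFDerivAt (x := z)
  exact h.congr_of_eventuallyEq (Filter.Eventually.of_forall fun w =>
    (InnerProductSpace.toDual_apply_apply (𝕜 := ℝ) (E := X) (x := c) (y := w)))

lemma page_hasGradientAt_half_norm_sq (c : ℝ) (z : X) :
    HasGradientAt (fun w : X => c / 2 * ‖w‖ ^ 2) (c • z) z := by
  rw [hasGradientAt_iff_hasFDerivAt]
  have h1 : HasFDerivAt (fun w : X => ‖w‖ ^ 2) (2 • (innerSL ℝ z)) z := by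
    simpa using (hasFDerivAt_id z).norm_sq
  have h2 := h1.const_mul (c / 2)
  refine h2.congr_fderiv ?_
  ext y
  simp [InnerProductSpace.toDual_apply_apply, real_inner_smul_left, two_smul]
  ring

lemma page_interp_lemma {f : X → ℝ} {M : ℝ} (hM : 0 < M) (hf : Differentiable ℝ f)
    (hlip : ∀ x y, ‖gradient f x - gradient f y‖ ≤ M * ‖x - y‖)
    (hc : ConvexOn ℝ Set.univ f) (x y : X) :
    f x - ⟪gradient f x, x⟫ + 1 / (2 * M) * ‖gradient f y - gradient f x‖ ^ 2
      ≤ f y - ⟪gradient f x, y⟫ := by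
  set u := gradient f x with hu
  set φ : X → ℝ := fun w => f w + ⟪-u, w⟫ with hφ
  have hφg : ∀ z, HasGradientAt φ (gradient f z - u) z := by
    intro z
    have h2 := ((hf z).hasGradientAt).add'' (page_hasGradientAt_inner_const (-u) z)
    have h3 : gradient f z - u = gradient f z + -u := sub_eq_add_neg _ _
    rw [hφ, h3]
    exact h2
  have hφgrad : ∀ z, gradient φ z = gradient f z - u := fun z => (hφg z).gradient
  have hφd : Differentiable ℝ φ := fun z => (hφg z).differentiableAt
  have hφlip : ∀ z w, ‖gradient φ z - gradient φ w‖ ≤ M * ‖z - w‖ := by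
    intro z w
    rw [hφgrad, hφgrad, sub_sub_sub_cancel_right]
    exact hlip z w
  have hφc : ConvexOn ℝ Set.univ φ := by
    have hlin : ConvexOn ℝ Set.univ (fun w : X => ⟪-u, w⟫) := by
      have h4 := (InnerProductSpace.toDual ℝ X (-u)).toLinearMap.convexOn
        (convex_univ (𝕜 := ℝ) (E := X))
      have he : (fun w : X => ⟪-u, w⟫)
          = ⇑((InnerProductSpace.toDual ℝ X (-u)).toLinearMap) := by
        funext w
        simp [InnerProductSpace.toDual_apply_apply]
      rw [he]
      exact h4
    exact hc.add hlin
  have hmin : ∀ z, φ x ≤ φ z := by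
    intro z
    have := page_convex_tangent hφd hφc x z
    rw [hφgrad] at this
    simpa [hu] using this
  set gy := gradient φ y with hgy
  have hdesc := page_descent_lemma (le_of_lt hM) hφd hφlip y (y - (1 / M) • gy)
  have h1 : y - (1 / M) • gy - y = -((1 / M) • gy) := by abel
  rw [h1] at hdesc
  have h2 : ⟪gy, -((1 / M) • gy)⟫ = -(1 / M) * ‖gy‖ ^ 2 := by
    rw [inner_neg_right, real_inner_smul_right, real_inner_self_eq_norm_sq]
    ring
  have h3 : ‖-((1 / M) • gy)‖ ^ 2 = (1 / M) ^ 2 * ‖gy‖ ^ 2 := by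
    rw [norm_neg, norm_smul, mul_pow, Real.norm_eq_abs, sq_abs]
  rw [h2, h3] at hdesc
  have hfinal : φ x ≤ φ y - 1 / (2 * M) * ‖gy‖ ^ 2 := by
    have := hmin (y - (1 / M) • gy)
    have hMne : M ≠ 0 := ne_of_gt hM
    have : φ x ≤ φ y + -(1 / M) * ‖gy‖ ^ 2 + M / 2 * ((1 / M) ^ 2 * ‖gy‖ ^ 2) :=
      le_trans this hdesc
    have he : -(1 / M) * ‖gy‖ ^ 2 + M / 2 * ((1 / M) ^ 2 * ‖gy‖ ^ 2)
        = -(1 / (2 * M) * ‖gy‖ ^ 2) := by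
      field_simp
      ring
    linarith [this, he.le, he.ge]
  have hgyeq : gy = gradient f y - u := by rw [hgy, hφgrad]
  have hx : φ x = f x + ⟪-u, x⟫ := rfl
  have hy : φ y = f y + ⟪-u, y⟫ := rfl
  rw [hx, hy, hgyeq] at hfinal
  simp only [inner_neg_left] at hfinal
  linarith

lemma page_cocoercive {f : X → ℝ} {M : ℝ} (hM : 0 < M) (hf : Differentiable ℝ f)
    (hlip : ∀ x y, ‖gradient f x - gradient f y‖ ≤ M * ‖x - y‖)
    (hc : ConvexOn ℝ Set.univ f) (x y : X) :
    ‖gradient f x - gradient f y‖ ^ 2 ≤ M * ⟪gradient f x - gradient f y, x - y⟫ := by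
  have h1 := page_interp_lemma hM hf hlip hc x y
  have h2 := page_interp_lemma hM hf hlip hc y x
  have hsq : ‖gradient f x - gradient f y‖ ^ 2 = ‖gradient f y - gradient f x‖ ^ 2 := by
    rw [norm_sub_rev]
  have hip : ⟪gradient f x - gradient f y, x - y⟫
      = ⟪gradient f x, x⟫ - ⟪gradient f x, y⟫ - ⟪gradient f y, x⟫ + ⟪gradient f y, y⟫ := by
    rw [inner_sub_left, inner_sub_right, inner_sub_right]
    ring
  have hMne : M ≠ 0 := ne_of_gt hM
  have key : ‖gradient f x - gradient f y‖ ^ 2 / M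
      ≤ ⟪gradient f x - gradient f y, x - y⟫ := by
    rw [hip]
    have e : 1 / (2 * M) * ‖gradient f y - gradient f x‖ ^ 2
        + 1 / (2 * M) * ‖gradient f x - gradient f y‖ ^ 2
        = ‖gradient f x - gradient f y‖ ^ 2 / M := by
      rw [hsq]
      field_simp
      ring
    linarith [h1, h2, e]
  have h5 := (div_le_iff₀ hM).mp key
  nlinarith [h5]

lemma page_weak_cocoercive {f : X → ℝ} {L τ : ℝ} (hL : 0 < L) (hτ0 : 0 ≤ τ) (hτL : τ ≤ L)
    (hf : Differentiable ℝ f)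
    (hlip : ∀ x y, ‖gradient f x - gradient f y‖ ≤ L * ‖x - y‖)
    (hwc : ConvexOn ℝ Set.univ (fun x => f x + τ / 2 * ‖x‖ ^ 2)) (x y : X) :
    ‖gradient f x - gradient f y‖ ^ 2
      ≤ (L - τ) * ⟪gradient f x - gradient f y, x - y⟫ + L * τ * ‖x - y‖ ^ 2 := by
  set h : X → ℝ := fun w => f w + τ / 2 * ‖w‖ ^ 2 with hh
  have hhg : ∀ z, HasGradientAt h (gradient f z + τ • z) z := fun z =>
    ((hf z).hasGradientAt).add'' (page_hasGradientAt_half_norm_sq τ z)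
  have hhgrad : ∀ z, gradient h z = gradient f z + τ • z := fun z => (hhg z).gradient
  have hhd : Differentiable ℝ h := fun z => (hhg z).differentiableAt
  have hhlip : ∀ z w, ‖gradient h z - gradient h w‖ ≤ (L + τ) * ‖z - w‖ := by
    intro z w
    rw [hhgrad, hhgrad]
    have he : gradient f z + τ • z - (gradient f w + τ • w)
        = (gradient f z - gradient f w) + τ • (z - w) := by
      rw [smul_sub]; abel
    rw [he]
    calc ‖(gradient f z - gradient f w) + τ • (z - w)‖
        ≤ ‖gradient f z - gradient f w‖ + ‖τ • (z - w)‖ := norm_add_le _ _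
      _ ≤ L * ‖z - w‖ + τ * ‖z - w‖ := by
          refine add_le_add (hlip z w) ?_
          rw [norm_smul]
          simp [abs_of_nonneg hτ0]
      _ = (L + τ) * ‖z - w‖ := by ring
  have hco := page_cocoercive (by linarith : (0:ℝ) < L + τ) hhd hhlip hwc x y
  rw [hhgrad, hhgrad] at hco
  set u := gradient f x - gradient f y with hu
  set w := x - y with hw
  have he : gradient f x + τ • x - (gradient f y + τ • y) = u + τ • w := by
    rw [hu, hw, smul_sub]; abel
  rw [he] at hco
  have e1 : ‖u + τ • w‖ ^ 2 = ‖u‖ ^ 2 + 2 * (τ * ⟪u, w⟫) + τ ^ 2 * ‖w‖ ^ 2 := by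
    rw [norm_add_sq_real, real_inner_smul_right, norm_smul, mul_pow, Real.norm_eq_abs, sq_abs]
  have e2 : ⟪u + τ • w, w⟫ = ⟪u, w⟫ + τ * ‖w‖ ^ 2 := by
    rw [inner_add_left, real_inner_smul_left, real_inner_self_eq_norm_sq]
  rw [e1, e2] at hco
  nlinarith [hco]

lemma page_hasGradientAt_smul_sum {n : ℕ} (f : Fin n → X → ℝ) (g : Fin n → X) (c : ℝ) (z : X)
    (h : ∀ i, HasGradientAt (f i) (g i) z) :
    HasGradientAt (fun w => c * ∑ i, f i w) (c • ∑ i, g i) z := by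
  rw [hasGradientAt_iff_hasFDerivAt]
  have hsum : HasFDerivAt (fun w => ∑ i, f i w)
      (∑ i, InnerProductSpace.toDual ℝ X (g i)) z :=
    HasFDerivAt.fun_sum (fun i _ => (h i).hasFDerivAt)
  have h2 := hsum.const_mul c
  refine h2.congr_fderiv ?_
  rw [map_smul, map_sum]

lemma page_avg_norm_add_sq {n : ℕ} (hn : 0 < n) (v : X) (u : Fin n → X) :
    (1/(n:ℝ)) * ∑ i, ‖v + u i‖ ^ 2
      = ‖v + (1/(n:ℝ)) • ∑ i, u i‖ ^ 2 + (1/(n:ℝ)) * ∑ i, ‖u i‖ ^ 2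
        - ‖(1/(n:ℝ)) • ∑ i, u i‖ ^ 2 := by
  have hnne : (n:ℝ) ≠ 0 := Nat.cast_ne_zero.mpr hn.ne'
  have h1 : ∑ i, ‖v + u i‖ ^ 2 = (n:ℝ) * ‖v‖ ^ 2 + 2 * ⟪v, ∑ i, u i⟫ + ∑ i, ‖u i‖ ^ 2 := by
    rw [Finset.sum_congr rfl (fun i _ => norm_add_sq_real v (u i))]
    rw [Finset.sum_add_distrib, Finset.sum_add_distrib, ← Finset.mul_sum, ← inner_sum,
      Finset.sum_const, Finset.card_univ, Fintype.card_fin, nsmul_eq_mul]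
  have h2 : ‖v + (1/(n:ℝ)) • ∑ i, u i‖ ^ 2
      = ‖v‖ ^ 2 + 2 * ((1/(n:ℝ)) * ⟪v, ∑ i, u i⟫) + ‖(1/(n:ℝ)) • ∑ i, u i‖ ^ 2 := by
    rw [norm_add_sq_real, real_inner_smul_right]
  rw [h1, h2]
  field_simp
  ring

end PageAux
/-- One-step Lyapunov contraction for PAGE under the PŁ condition.
The conditional expectation of `Ψ^{t+1}` given the current state `(x, g)` is written out
explicitly as the mixture over the coin `θ` and the uniform index `i`. -/
theorem page_one_step_contraction_PL
    {X : Type*} [NormedAddCommGroup X] [InnerProductSpace ℝ X]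
    [FiniteDimensional ℝ X]
    (n : ℕ) (hn : 0 < n) (f : Fin n → X → ℝ) (L τ μ : ℝ)
    (hL : 0 < L) (hτ0 : 0 ≤ τ) (hτL : τ ≤ L) (hμ : 0 < μ)
    (hdiff : ∀ i, Differentiable ℝ (f i))
    (hlip : ∀ i, ∀ x y : X, ‖gradient (f i) x - gradient (f i) y‖ ≤ L * ‖x - y‖)
    (hwc : ∀ i, ConvexOn ℝ Set.univ (fun x => f i x + τ / 2 * ‖x‖ ^ 2))
    (F : X → ℝ) (hF : F = fun y => (1 / n : ℝ) * ∑ i, f i y)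
    (hbdd : BddBelow (Set.range F))
    (hPL : ∀ x : X, ‖gradient F x‖ ^ 2 ≥ 2 * μ * (F x - sInf (Set.range F)))
    (p γ a b ρ : ℝ) (hp0 : 0 < p) (hp1 : p ≤ 1) (hγ0 : 0 < γ)
    (hγ : γ ≤ 1 / (L * (1 + Real.sqrt (4 * τ / (L + τ)) * Real.sqrt ((1 - p) / p))))
    (hγτ : τ = 0 → γ < 1 / L)
    (ha : a = 1 - γ * (L - τ) / 2) (hb : b = γ * (L - τ) / 2)
    (hρ : ρ = max (1 - (1 - 2 * b) * γ * μ) (1 - p * (1 - 1 / (2 * a))))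
    (Ψ : X → X → ℝ)
    (hΨ : Ψ = fun x g => F x - sInf (Set.range F) - b * γ * ‖gradient F x‖ ^ 2
        + a * γ / p * ‖g - gradient F x‖ ^ 2 + b * γ / p * ‖g‖ ^ 2) :
    ρ < 1 ∧
    ∀ x g : X,
      p * Ψ (x - γ • g) (gradient F (x - γ • g)) +
        (1 - p) * ((1 / n : ℝ) * ∑ i,
          Ψ (x - γ • g) (g + gradient (f i) (x - γ • g) - gradient (f i) x)) ≤
      ρ * Ψ x g := by
  subst ha hb
  -- scalar groundwork
  have hpne : p ≠ 0 := ne_of_gt hp0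
  have hnpos : (0:ℝ) < (n:ℝ) := by exact_mod_cast hn
  have hnne : (n:ℝ) ≠ 0 := ne_of_gt hnpos
  set c : ℝ := Real.sqrt (4 * τ / (L + τ)) * Real.sqrt ((1 - p) / p) with hcdef
  have hc0 : 0 ≤ c := mul_nonneg (Real.sqrt_nonneg _) (Real.sqrt_nonneg _)
  have hLc : 0 < L * (1 + c) := by positivity
  have hγ1 : γ * (L * (1 + c)) ≤ 1 := by
    have h := (le_div_iff₀ hLc).mp hγ
    linarith
  have hLγ : L * γ ≤ 1 := by nlinarith [mul_nonneg (mul_nonneg hL.le hγ0.le) hc0]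
  have hLγc : L * γ * c ≤ 1 - L * γ := by nlinarith
  have hq0 : (0:ℝ) ≤ (1 - p) / p := div_nonneg (by linarith) hp0.le
  have hc2 : c ^ 2 = (4 * τ / (L + τ)) * ((1 - p) / p) := by
    rw [hcdef, mul_pow, Real.sq_sqrt (by positivity), Real.sq_sqrt hq0]
  have hLτpos : (0:ℝ) < L + τ := by linarith
  have hqτ : ((1 - p) / p) * τ = c ^ 2 * (L + τ) / 4 := by
    rw [hc2]
    field_simp
  have hkey : ((1 - p) / p) * (L * τ * γ ^ 2) ≤ (1 - L * γ) / 2 := by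
    have e1 : ((1 - p) / p) * (L * τ * γ ^ 2) = (L * γ ^ 2) * (((1 - p) / p) * τ) := by ring
    rw [e1, hqτ]
    have t0 : (0:ℝ) ≤ L * γ * c := by positivity
    have t1 : L * γ ^ 2 * (c ^ 2 * (L + τ)) ≤ L * γ ^ 2 * (c ^ 2 * (2 * L)) :=
      mul_le_mul_of_nonneg_left (by nlinarith [sq_nonneg c]) (by positivity)
    have t2 : (L * γ * c) * (L * γ * c) ≤ (1 - L * γ) * (L * γ * c) :=
      mul_le_mul_of_nonneg_right hLγc t0
    have t3 : L * γ * c ≤ 1 := by nlinarith [mul_nonneg hL.le hγ0.le]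
    have t4 : (1 - L * γ) * (L * γ * c) ≤ (1 - L * γ) * 1 :=
      mul_le_mul_of_nonneg_left t3 (by linarith)
    nlinarith [t1, t2, t4]
  have h2b : γ * (L - τ) < 1 := by
    rcases eq_or_lt_of_le hτ0 with h | h
    · have h' := hγτ h.symm
      rw [lt_div_iff₀ hL] at h'
      nlinarith
    · nlinarith [mul_pos hγ0 h]
  have hb0 : (0:ℝ) ≤ γ * (L - τ) / 2 := by
    have : (0:ℝ) ≤ γ * (L - τ) := mul_nonneg hγ0.le (by linarith)
    linarith
  have hapos : (0:ℝ) < 1 - γ * (L - τ) / 2 := by linarith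
  have ha2 : (1:ℝ) < 2 * (1 - γ * (L - τ) / 2) := by linarith
  -- ρ bounds
  have hρ1lt : 1 - (1 - 2 * (γ * (L - τ) / 2)) * γ * μ < 1 := by
    have : 0 < (1 - 2 * (γ * (L - τ) / 2)) * γ * μ := by
      apply mul_pos (mul_pos (by linarith) hγ0) hμ
    linarith
  have hρ2lt : 1 - p * (1 - 1 / (2 * (1 - γ * (L - τ) / 2))) < 1 := by
    have h1 : 1 / (2 * (1 - γ * (L - τ) / 2)) < 1 := by
      rw [div_lt_one (by linarith)]
      linarith
    have := mul_pos hp0 (by linarith : (0:ℝ) < 1 - 1 / (2 * (1 - γ * (L - τ) / 2)))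
    linarith
  have hρlt : ρ < 1 := by rw [hρ]; exact max_lt hρ1lt hρ2lt
  have hρ1le : 1 - (1 - 2 * (γ * (L - τ) / 2)) * γ * μ ≤ ρ := hρ ▸ le_max_left _ _
  have hρ2le : 1 - p * (1 - 1 / (2 * (1 - γ * (L - τ) / 2))) ≤ ρ := hρ ▸ le_max_right _ _
  have hρle1 : ρ ≤ 1 := hρlt.le
  refine ⟨hρlt, ?_⟩
  -- gradient facts for F
  have hFgradAt : ∀ z, HasGradientAt F ((1/(n:ℝ)) • ∑ i, gradient (f i) z) z := by
    intro z
    rw [hF]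
    exact page_hasGradientAt_smul_sum f (fun i => gradient (f i) z) (1/(n:ℝ)) z
      (fun i => (hdiff i z).hasGradientAt)
  have hFgrad : ∀ z, gradient F z = (1/(n:ℝ)) • ∑ i, gradient (f i) z :=
    fun z => (hFgradAt z).gradient
  have hFdiff : Differentiable ℝ F := fun z => (hFgradAt z).differentiableAt
  have hFlip : ∀ z w, ‖gradient F z - gradient F w‖ ≤ L * ‖z - w‖ := by
    intro z w
    rw [hFgrad, hFgrad, ← smul_sub, ← Finset.sum_sub_distrib, norm_smul]
    calc ‖(1/(n:ℝ))‖ * ‖∑ i, (gradient (f i) z - gradient (f i) w)‖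
        ≤ (1/(n:ℝ)) * ∑ i, ‖gradient (f i) z - gradient (f i) w‖ := by
          rw [Real.norm_eq_abs, abs_of_nonneg (by positivity : (0:ℝ) ≤ 1/(n:ℝ))]
          exact mul_le_mul_of_nonneg_left (norm_sum_le _ _) (by positivity)
      _ ≤ (1/(n:ℝ)) * ∑ _i : Fin n, L * ‖z - w‖ := by
          exact mul_le_mul_of_nonneg_left
            (Finset.sum_le_sum (fun i _ => hlip i z w)) (by positivity)
      _ = L * ‖z - w‖ := by
          rw [Finset.sum_const, Finset.card_univ, Fintype.card_fin, nsmul_eq_mul]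
          field_simp
  set Fstar : ℝ := sInf (Set.range F) with hFstar
  have hFstarle : ∀ z, Fstar ≤ F z := fun z => csInf_le hbdd ⟨z, rfl⟩
  intro x g
  set x' : X := x - γ • g with hx'
  set G : X := gradient F x with hG
  set G' : X := gradient F x' with hG'
  set e : X := g - G with he
  set d : Fin n → X := fun i => gradient (f i) x' - gradient (f i) x with hd
  set D : X := (1/(n:ℝ)) • ∑ i, d i with hDdef
  clear_value x' G G' e d D
  -- expansions of Ψ
  have hzero : ‖G' - G'‖ ^ 2 = (0:ℝ) := by simp
  have e1 : Ψ x' G' = F x' - Fstar - (γ * (L - τ) / 2) * γ * ‖G'‖ ^ 2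
      + (γ * (L - τ) / 2) * γ / p * ‖G'‖ ^ 2 := by
    simp only [hΨ]
    rw [← hG', sub_self, norm_zero]
    ring
  have e2 : ∀ i : Fin n, Ψ x' (g + gradient (f i) x' - gradient (f i) x)
      = (F x' - Fstar - (γ * (L - τ) / 2) * γ * ‖G'‖ ^ 2)
        + (1 - γ * (L - τ) / 2) * γ / p * ‖g - G' + d i‖ ^ 2
        + (γ * (L - τ) / 2) * γ / p * ‖g + d i‖ ^ 2 := by
    intro i
    have epat1 : g + gradient (f i) x' - gradient (f i) x - G' = g - G' + d i := by
      simp only [hd]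
      abel
    have epat2 : g + gradient (f i) x' - gradient (f i) x = g + d i := by
      simp only [hd]
      abel
    simp only [hΨ]
    rw [← hG', epat1, epat2]
  have esum : (1/(n:ℝ)) * ∑ i, Ψ x' (g + gradient (f i) x' - gradient (f i) x)
      = (F x' - Fstar - (γ * (L - τ) / 2) * γ * ‖G'‖ ^ 2)
        + (1 - γ * (L - τ) / 2) * γ / p * ((1/(n:ℝ)) * ∑ i, ‖g - G' + d i‖ ^ 2)
        + (γ * (L - τ) / 2) * γ / p * ((1/(n:ℝ)) * ∑ i, ‖g + d i‖ ^ 2) := by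
    rw [Finset.sum_congr rfl (fun i _ => e2 i)]
    rw [Finset.sum_add_distrib, Finset.sum_add_distrib, Finset.sum_const,
      Finset.card_univ, Fintype.card_fin, nsmul_eq_mul, ← Finset.mul_sum, ← Finset.mul_sum]
    field_simp
  have eΨxg : Ψ x g = F x - Fstar - (γ * (L - τ) / 2) * γ * ‖G‖ ^ 2
      + (1 - γ * (L - τ) / 2) * γ / p * ‖e‖ ^ 2
      + (γ * (L - τ) / 2) * γ / p * ‖g‖ ^ 2 := by
    simp only [hΨ]
    rw [← hG, ← he]
  rw [e1, esum, eΨxg]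
  -- vector facts
  have hDval : G' - G = D := by
    rw [hG', hG, hFgrad, hFgrad, ← smul_sub, ← Finset.sum_sub_distrib, hDdef, hd]
  have hgG' : g - G' + D = e := by
    rw [he, ← hDval]
    abel
  have hT1 : (1/(n:ℝ)) * ∑ i, ‖g - G' + d i‖ ^ 2
      = ‖g - G' + D‖ ^ 2 + (1/(n:ℝ)) * ∑ i, ‖d i‖ ^ 2 - ‖D‖ ^ 2 := by
    rw [hDdef]; exact page_avg_norm_add_sq hn (g - G') d
  have hT1e : ‖g - G' + D‖ ^ 2 = ‖e‖ ^ 2 := by rw [hgG']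
  have hT2 : (1/(n:ℝ)) * ∑ i, ‖g + d i‖ ^ 2
      = ‖g + D‖ ^ 2 + (1/(n:ℝ)) * ∑ i, ‖d i‖ ^ 2 - ‖D‖ ^ 2 := by
    rw [hDdef]; exact page_avg_norm_add_sq hn g d
  have hgD2 : ‖g + D‖ ^ 2 = ‖g‖ ^ 2 + 2 * ⟪g, D⟫ + ‖D‖ ^ 2 := norm_add_sq_real g D
  have hcommgD : ⟪g, D⟫ = ⟪D, g⟫ := real_inner_comm _ _
  have h4 : x' - x = -(γ • g) := by rw [hx']; abel
  have h5 : ⟪D, x' - x⟫ = -(γ * ⟪D, g⟫) := by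
    rw [h4, inner_neg_right, real_inner_smul_right]
  have h6 : ‖x' - x‖ ^ 2 = γ ^ 2 * ‖g‖ ^ 2 := by
    rw [h4, norm_neg, norm_smul, mul_pow, Real.norm_eq_abs, sq_abs]
  have hDsum : ∑ i, d i = (n:ℝ) • D := by
    rw [hDdef, smul_smul, mul_one_div, div_self hnne, one_smul]
  -- averaged weak cocoercivity
  have hSb : (1/(n:ℝ)) * ∑ i, ‖d i‖ ^ 2
      ≤ (L - τ) * (-(γ * ⟪D, g⟫)) + L * τ * (γ ^ 2 * ‖g‖ ^ 2) := by
    have h1 : ∀ i : Fin n, ‖d i‖ ^ 2 ≤ (L - τ) * ⟪d i, x' - x⟫ + L * τ * ‖x' - x‖ ^ 2 := by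
      intro i
      have := page_weak_cocoercive hL hτ0 hτL (hdiff i) (hlip i) (hwc i) x' x
      simpa only [hd] using this
    have h2 : ∑ i, ‖d i‖ ^ 2
        ≤ (L - τ) * ((n:ℝ) * ⟪D, x' - x⟫) + (n:ℝ) * (L * τ * ‖x' - x‖ ^ 2) := by
      calc ∑ i, ‖d i‖ ^ 2
          ≤ ∑ i, ((L - τ) * ⟪d i, x' - x⟫ + L * τ * ‖x' - x‖ ^ 2) :=
            Finset.sum_le_sum (fun i _ => h1 i)
        _ = (L - τ) * ⟪∑ i, d i, x' - x⟫ + (n:ℝ) * (L * τ * ‖x' - x‖ ^ 2) := by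
            rw [Finset.sum_add_distrib, ← Finset.mul_sum, ← sum_inner, Finset.sum_const,
              Finset.card_univ, Fintype.card_fin, nsmul_eq_mul]
        _ = (L - τ) * ((n:ℝ) * ⟪D, x' - x⟫) + (n:ℝ) * (L * τ * ‖x' - x‖ ^ 2) := by
            rw [hDsum, real_inner_smul_left]
    have h7 := mul_le_mul_of_nonneg_left h2 (by positivity : (0:ℝ) ≤ 1/(n:ℝ))
    have h8 : (1/(n:ℝ)) * ((L - τ) * ((n:ℝ) * ⟪D, x' - x⟫) + (n:ℝ) * (L * τ * ‖x' - x‖ ^ 2))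
        = (L - τ) * ⟪D, x' - x⟫ + L * τ * ‖x' - x‖ ^ 2 := by
      field_simp
    rw [h8] at h7
    rw [h5, h6] at h7
    exact h7
  -- descent
  have hdesc := page_descent_lemma hL.le hFdiff hFlip x x'
  rw [← hG] at hdesc
  have hipG : ⟪G, x' - x⟫ = -(γ * ⟪G, g⟫) := by
    rw [h4, inner_neg_right, real_inner_smul_right]
  rw [hipG, h6] at hdesc
  have hns : ‖e‖ ^ 2 = ‖g‖ ^ 2 - 2 * ⟪g, G⟫ + ‖G‖ ^ 2 := by
    rw [he]; exact norm_sub_sq_real g G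
  have hcomm2 : ⟪g, G⟫ = ⟪G, g⟫ := real_inner_comm _ _
  have hip2' : γ * ⟪G, g⟫ = γ/2 * ‖G‖ ^ 2 + γ/2 * ‖g‖ ^ 2 - γ/2 * ‖e‖ ^ 2 := by
    linear_combination (γ/2) * hns - γ * hcomm2
  have stepdesc : F x' - Fstar ≤ (F x - Fstar) - γ/2 * ‖G‖ ^ 2
      - γ/2 * (1 - L * γ) * ‖g‖ ^ 2 + γ/2 * ‖e‖ ^ 2 := by
    linarith [hdesc, hip2']
  -- nonnegativity
  have hPLx := hPL x
  rw [← hG] at hPLx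
  have hA0 : 0 ≤ F x - Fstar := sub_nonneg.mpr (hFstarle x)
  have hE0 : (0:ℝ) ≤ ‖e‖ ^ 2 := by positivity
  have hh0 : (0:ℝ) ≤ ‖g‖ ^ 2 := by positivity
  have hsG0 : (0:ℝ) ≤ ‖G‖ ^ 2 := by positivity
  have hDn0 : (0:ℝ) ≤ ‖D‖ ^ 2 := by positivity
  -- step1 : variance control
  have step1 : (1 - γ * (L - τ) / 2) * ((1/(n:ℝ)) * ∑ i, ‖g - G' + d i‖ ^ 2)
      + (γ * (L - τ) / 2) * ((1/(n:ℝ)) * ∑ i, ‖g + d i‖ ^ 2)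
      ≤ (1 - γ * (L - τ) / 2) * ‖e‖ ^ 2 + (γ * (L - τ) / 2 + L * τ * γ ^ 2) * ‖g‖ ^ 2 := by
    rw [hT1, hT2, hT1e, hgD2, hcommgD]
    have hD2 : 0 ≤ (1 - γ * (L - τ) / 2) * ‖D‖ ^ 2 := mul_nonneg hapos.le hDn0
    linarith only [hSb, hD2]
  have hQγ : (0:ℝ) ≤ (1 - p)/p * γ := mul_nonneg hq0 hγ0.le
  have step1' := mul_le_mul_of_nonneg_left step1 hQγ
  -- stepS
  have hPLx' : 2 * μ * (F x - Fstar) ≤ ‖G‖ ^ 2 := hPLx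
  have t1 : (1 - γ * (L - τ)) * (γ/2) * (2 * μ * (F x - Fstar))
      ≤ (1 - γ * (L - τ)) * (γ/2) * ‖G‖ ^ 2 :=
    mul_le_mul_of_nonneg_left hPLx'
      (mul_nonneg (by linarith) (by linarith))
  have t2 : (1 - (1 - 2 * (γ * (L - τ) / 2)) * γ * μ) * (F x - Fstar) ≤ ρ * (F x - Fstar) :=
    mul_le_mul_of_nonneg_right hρ1le hA0
  have t3 : ρ * ((γ * (L - τ) / 2) * γ * ‖G‖ ^ 2) ≤ 1 * ((γ * (L - τ) / 2) * γ * ‖G‖ ^ 2) :=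
    mul_le_mul_of_nonneg_right hρle1 (mul_nonneg (mul_nonneg hb0 hγ0.le) hsG0)
  have stepS : F x - Fstar - γ/2 * ‖G‖ ^ 2
      ≤ ρ * (F x - Fstar) - ρ * ((γ * (L - τ) / 2) * γ) * ‖G‖ ^ 2 := by
    linarith only [t1, t2, t3]
  -- stepE
  have veqgen : ∀ A : ℝ, A ≠ 0 → (1 - p * (1 - 1 / (2 * A))) * (A * γ / p)
      = γ/2 + (1 - p)/p * γ * A := by
    intro A hA
    field_simp
    ring
  have veq : (1 - p * (1 - 1 / (2 * (1 - γ * (L - τ) / 2)))) * ((1 - γ * (L - τ) / 2) * γ / p)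
      = γ/2 + (1 - p)/p * γ * (1 - γ * (L - τ) / 2) := veqgen _ (ne_of_gt hapos)
  have v3 : (1 - p * (1 - 1 / (2 * (1 - γ * (L - τ) / 2)))) * ((1 - γ * (L - τ) / 2) * γ / p)
      ≤ ρ * ((1 - γ * (L - τ) / 2) * γ / p) :=
    mul_le_mul_of_nonneg_right hρ2le (div_nonneg (mul_nonneg hapos.le hγ0.le) hp0.le)
  have stepE : (γ/2 + (1 - p)/p * γ * (1 - γ * (L - τ) / 2)) * ‖e‖ ^ 2
      ≤ (ρ * ((1 - γ * (L - τ) / 2) * γ / p)) * ‖e‖ ^ 2 :=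
    mul_le_mul_of_nonneg_right (by linarith [veq, v3]) hE0
  -- stepH
  have wgen : ∀ A B : ℝ, A ≠ 0 → (1 - p * (1 - 1 / (2 * A))) * (B * γ / p)
      = (1 - p)/p * γ * B + γ * B / (2 * A) := by
    intro A B hA
    field_simp
    ring
  have w1 : (1 - p * (1 - 1 / (2 * (1 - γ * (L - τ) / 2)))) * ((γ * (L - τ) / 2) * γ / p)
      = (1 - p)/p * γ * (γ * (L - τ) / 2)
        + γ * (γ * (L - τ) / 2) / (2 * (1 - γ * (L - τ) / 2)) :=
    wgen _ _ (ne_of_gt hapos)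
  have w2 : (1 - p * (1 - 1 / (2 * (1 - γ * (L - τ) / 2)))) * ((γ * (L - τ) / 2) * γ / p)
      ≤ ρ * ((γ * (L - τ) / 2) * γ / p) :=
    mul_le_mul_of_nonneg_right hρ2le (div_nonneg (mul_nonneg hb0 hγ0.le) hp0.le)
  have w3 : (0:ℝ) ≤ γ * (γ * (L - τ) / 2) / (2 * (1 - γ * (L - τ) / 2)) :=
    div_nonneg (mul_nonneg hγ0.le hb0) (by linarith)
  have w4 : (1 - p)/p * γ * (L * τ * γ ^ 2) ≤ γ * ((1 - L * γ)/2) := by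
    have h9 := mul_le_mul_of_nonneg_left hkey hγ0.le
    linarith only [h9]
  have coefH : (1 - p)/p * γ * (γ * (L - τ) / 2 + L * τ * γ ^ 2) - γ/2 * (1 - L * γ)
      ≤ ρ * ((γ * (L - τ) / 2) * γ / p) := by
    linarith only [w1, w2, w3, w4]
  have stepH : ((1 - p)/p * γ * (γ * (L - τ) / 2 + L * τ * γ ^ 2) - γ/2 * (1 - L * γ)) * ‖g‖ ^ 2
      ≤ (ρ * ((γ * (L - τ) / 2) * γ / p)) * ‖g‖ ^ 2 :=
    mul_le_mul_of_nonneg_right coefH hh0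
  have hcancel : p * ((γ * (L - τ) / 2) * γ / p * ‖G'‖ ^ 2)
      = (γ * (L - τ) / 2) * γ * ‖G'‖ ^ 2 := by
    field_simp
  ring_nf at stepdesc step1' stepS stepE stepH hcancel ⊢
  linarith only [stepdesc, step1', stepS, stepE, stepH, hcancel]
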